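/- The variance of the spillage distribution equals n·H_1 - n²·H_1² + n(n-1)·H_2, where H_ℓ = φ^ℓ · S(n-ℓ, k, φ)/S(n, k, φ), for k ≤ n and φ > 0. -/

import Mathlib

open Finset Filter Real

/-- Central Stirling numbers of the second kind. -/
def stirling2 : ℕ → ℕ → ℕ
  | 0, 0 => 1
  | 0, _ + 1 => 0
  | _ + 1, 0 => 0
  | n + 1, k + 1 => (k + 1) * stirling2 n (k + 1) + stirling2 n k

/-- Noncentral Stirling numbers of the second kind. -/
noncomputable def ncS (n k : ℕ) (φ : ℝ) : ℝ :=
  ∑ j ∈ Finset.range (n + 1), (n.choose j : ℝ) * φ ^ (n - j) * (stirling2 j k : ℝ)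

/-- Spillage mass function. -/
noncomputable def spillage (r n k : ℕ) (φ : ℝ) : ℝ :=
  (n.choose (k + r) : ℝ) * φ ^ (n - k - r) * (stirling2 (k + r) k : ℝ) / ncS n k φ

lemma stirling2_eq_zero : ∀ (j k : ℕ), j < k → stirling2 j k = 0 := by
  intro j
  induction j with
  | zero =>
    intro k h
    match k, h with
    | k + 1, _ => rfl
  | succ m ih =>
    intro k h
    match k, h with
    | k' + 1, h =>
      show (k' + 1) * stirling2 m (k' + 1) + stirling2 m k' = 0
      rw [ih _ (by omega), ih _ (by omega)]
      simp

lemma stirling2_self : ∀ k : ℕ, stirling2 k k = 1 := by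
  intro k
  induction k with
  | zero => rfl
  | succ m ih =>
    show (m + 1) * stirling2 m (m + 1) + stirling2 m m = 1
    rw [stirling2_eq_zero m (m + 1) (by omega), ih]
    simp

lemma ncS_pos {n k : ℕ} (hk : k ≤ n) {φ : ℝ} (hφ : 0 < φ) : 0 < ncS n k φ := by
  unfold ncS
  apply Finset.sum_pos' (fun j _ => by positivity)
  refine ⟨k, Finset.mem_range.mpr (by omega), ?_⟩
  rw [stirling2_self]
  have := Nat.choose_pos hk
  positivity

lemma choose_sub_mul (m j : ℕ) : (m + 1 - j) * (m + 1).choose j = (m + 1) * m.choose j := by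
  rw [mul_comm (m + 1 - j), ← Nat.choose_succ_right_eq, ← Nat.add_one_mul_choose_eq]

lemma reindex (n k : ℕ) (hk : k ≤ n) (f : ℕ → ℝ) (hf : ∀ j < k, f j = 0) :
    ∑ j ∈ Finset.range (n + 1), f j = ∑ r ∈ Finset.range (n - k + 1), f (k + r) := by
  have h1 : ∑ j ∈ Finset.Ico 0 k, f j = 0 :=
    Finset.sum_eq_zero (fun j hj => hf j (Finset.mem_Ico.mp hj).2)
  rw [Finset.range_eq_Ico, ← Finset.sum_Ico_consecutive _ (Nat.zero_le k) (by omega : k ≤ n + 1),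
    h1, zero_add, Finset.sum_Ico_eq_sum_range, (by omega : n + 1 - k = n - k + 1)]

lemma sum1 (n k : ℕ) (φ : ℝ) :
    ∑ j ∈ Finset.range (n + 1),
        ((n : ℝ) - j) * ((n.choose j : ℝ) * φ ^ (n - j) * (stirling2 j k : ℝ)) =
      (n : ℝ) * (φ * ncS (n - 1) k φ) := by
  match n with
  | 0 => simp
  | m + 1 =>
    rw [Finset.sum_range_succ]
    push_cast
    rw [sub_self, zero_mul, add_zero]
    have hterm : ∀ j ∈ Finset.range (m + 1),
        ((m : ℝ) + 1 - j) * (((m + 1).choose j : ℝ) * φ ^ (m + 1 - j) * (stirling2 j k : ℝ)) =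
        ((m : ℝ) + 1) * φ * ((m.choose j : ℝ) * φ ^ (m - j) * (stirling2 j k : ℝ)) := by
      intro j hj
      have hj' : j ≤ m := by simpa [Nat.lt_succ_iff] using Finset.mem_range.mp hj
      have hc : ((m + 1 - j : ℕ) : ℝ) * (((m + 1).choose j : ℕ) : ℝ) =
          ((m + 1 : ℕ) : ℝ) * ((m.choose j : ℕ) : ℝ) := by
        exact_mod_cast choose_sub_mul m j
      push_cast at hc
      have hcast : (m : ℝ) + 1 - (j : ℝ) = ((m + 1 - j : ℕ) : ℝ) := by
        rw [Nat.cast_sub (by omega)]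
        push_cast
        try ring
      have hpow : φ ^ (m + 1 - j) = φ ^ (m - j) * φ := by
        rw [(by omega : m + 1 - j = (m - j) + 1), pow_succ]
      rw [hcast, hpow]
      push_cast at hcast
      linear_combination (φ ^ (m - j) * φ * (stirling2 j k : ℝ)) * hc
    rw [Finset.sum_congr rfl hterm, ← Finset.mul_sum]
    have hnc : ncS m k φ = ∑ j ∈ Finset.range (m + 1),
        (m.choose j : ℝ) * φ ^ (m - j) * (stirling2 j k : ℝ) := rfl
    rw [hnc]
    ring

lemma sum2 (n k : ℕ) (φ : ℝ) :
    ∑ j ∈ Finset.range (n + 1),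
        ((n : ℝ) - j) * (((n : ℝ) - j - 1) *
          ((n.choose j : ℝ) * φ ^ (n - j) * (stirling2 j k : ℝ))) =
      (n : ℝ) * (((n : ℝ) - 1) * (φ ^ 2 * ncS (n - 2) k φ)) := by
  match n with
  | 0 => simp
  | 1 =>
    rw [Finset.sum_range_succ, Finset.sum_range_succ, Finset.sum_range_zero]
    norm_num
  | m + 2 =>
    rw [Finset.sum_range_succ, Finset.sum_range_succ]
    push_cast
    have hl1 : ((m : ℝ) + 2 - ((m : ℝ) + 2)) * (((m : ℝ) + 2 - ((m : ℝ) + 2) - 1) *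
        (((m + 2).choose (m + 2) : ℝ) * φ ^ (m - m) * (stirling2 (m + 2) k : ℝ))) = 0 := by
      ring
    have hl2 : ((m : ℝ) + 2 - ((m : ℝ) + 1)) * (((m : ℝ) + 2 - ((m : ℝ) + 1) - 1) *
        (((m + 2).choose (m + 1) : ℝ) * φ ^ (m + 1 - m) * (stirling2 (m + 1) k : ℝ))) = 0 := by
      ring
    rw [hl1, hl2, add_zero, add_zero]
    have hterm : ∀ j ∈ Finset.range (m + 1),
        ((m : ℝ) + 2 - j) * (((m : ℝ) + 2 - j - 1) *
          (((m + 2).choose j : ℝ) * φ ^ (m + 2 - j) * (stirling2 j k : ℝ))) =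
        ((m : ℝ) + 2) * (((m : ℝ) + 1) * φ ^ 2) *
          ((m.choose j : ℝ) * φ ^ (m - j) * (stirling2 j k : ℝ)) := by
      intro j hj
      have hj' : j ≤ m := by simpa [Nat.lt_succ_iff] using Finset.mem_range.mp hj
      have hc1n : (m + 2 - j) * (m + 2).choose j = (m + 2) * (m + 1).choose j :=
        choose_sub_mul (m + 1) j
      have hc2n : (m + 1 - j) * (m + 1).choose j = (m + 1) * m.choose j := choose_sub_mul m j
      have hc1 : ((m + 2 - j : ℕ) : ℝ) * (((m + 2).choose j : ℕ) : ℝ) =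
          ((m + 2 : ℕ) : ℝ) * (((m + 1).choose j : ℕ) : ℝ) := by exact_mod_cast hc1n
      have hc2 : ((m + 1 - j : ℕ) : ℝ) * (((m + 1).choose j : ℕ) : ℝ) =
          ((m + 1 : ℕ) : ℝ) * ((m.choose j : ℕ) : ℝ) := by exact_mod_cast hc2n
      push_cast at hc1 hc2
      have hcast2 : (m : ℝ) + 2 - (j : ℝ) - 1 = ((m + 1 - j : ℕ) : ℝ) := by
        rw [Nat.cast_sub (by omega)]
        push_cast
        try ring
      have hcast1 : (m : ℝ) + 2 - (j : ℝ) = ((m + 2 - j : ℕ) : ℝ) := by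
        rw [Nat.cast_sub (by omega)]
        push_cast
        try ring
      have hpow : φ ^ (m + 2 - j) = φ ^ (m - j) * φ ^ 2 := by
        rw [(by omega : m + 2 - j = (m - j) + 2), pow_add]
      rw [hcast2, hcast1, hpow]
      linear_combination (((m + 1 - j : ℕ) : ℝ) * φ ^ (m - j) * φ ^ 2 * (stirling2 j k : ℝ)) * hc1
        + (((m : ℝ) + 2) * φ ^ (m - j) * φ ^ 2 * (stirling2 j k : ℝ)) * hc2
    rw [Finset.sum_congr rfl hterm, ← Finset.mul_sum]
    have hnc : ncS m k φ = ∑ j ∈ Finset.range (m + 1),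
        (m.choose j : ℝ) * φ ^ (m - j) * (stirling2 j k : ℝ) := rfl
    rw [hnc]
    ring

theorem stmt8 (n k : ℕ) (hk : k ≤ n) (φ : ℝ) (hφ : 0 < φ) :
    (∑ r ∈ Finset.range (n - k + 1), (r : ℝ) ^ 2 * spillage r n k φ) -
        (∑ r ∈ Finset.range (n - k + 1), (r : ℝ) * spillage r n k φ) ^ 2 =
      (n : ℝ) * (φ ^ 1 * ncS (n - 1) k φ / ncS n k φ) -
        (n : ℝ) ^ 2 * (φ ^ 1 * ncS (n - 1) k φ / ncS n k φ) ^ 2 +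
        (n : ℝ) * ((n : ℝ) - 1) * (φ ^ 2 * ncS (n - 2) k φ / ncS n k φ) := by
  have hN : 0 < ncS n k φ := ncS_pos hk hφ
  set T : ℕ → ℝ := fun j => (n.choose j : ℝ) * φ ^ (n - j) * (stirling2 j k : ℝ) with hT
  have hzero : ∀ j < k, (stirling2 j k : ℝ) = 0 := by
    intro j hj; rw [stirling2_eq_zero j k hj]; norm_num
  have e1 : ∑ r ∈ Finset.range (n - k + 1), (r : ℝ) * spillage r n k φ =
      (∑ j ∈ Finset.range (n + 1), ((j : ℝ) - k) * T j) / ncS n k φ := by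
    rw [reindex n k hk (fun j => ((j : ℝ) - k) * T j) (fun j hj => by
      simp [hT, hzero j hj]), Finset.sum_div]
    apply Finset.sum_congr rfl
    intro r hr
    simp only [hT, spillage, Nat.sub_sub]
    push_cast
    ring
  have e2 : ∑ r ∈ Finset.range (n - k + 1), (r : ℝ) ^ 2 * spillage r n k φ =
      (∑ j ∈ Finset.range (n + 1), ((j : ℝ) - k) ^ 2 * T j) / ncS n k φ := by
    rw [reindex n k hk (fun j => ((j : ℝ) - k) ^ 2 * T j) (fun j hj => by
      simp [hT, hzero j hj]), Finset.sum_div]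
    apply Finset.sum_congr rfl
    intro r hr
    simp only [hT, spillage, Nat.sub_sub]
    push_cast
    ring
  have h0 : ∑ j ∈ Finset.range (n + 1), T j = ncS n k φ := rfl
  have h1 : ∑ j ∈ Finset.range (n + 1), ((n : ℝ) - j) * T j = (n : ℝ) * (φ * ncS (n - 1) k φ) :=
    sum1 n k φ
  have h2 : ∑ j ∈ Finset.range (n + 1), ((n : ℝ) - j) * (((n : ℝ) - j - 1) * T j) =
      (n : ℝ) * (((n : ℝ) - 1) * (φ ^ 2 * ncS (n - 2) k φ)) := sum2 n k φ
  have hA : ∑ j ∈ Finset.range (n + 1), ((j : ℝ) - k) * T j =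
      ((n : ℝ) - k) * ncS n k φ - (n : ℝ) * (φ * ncS (n - 1) k φ) := by
    rw [← h0, ← h1, Finset.mul_sum, ← Finset.sum_sub_distrib]
    exact Finset.sum_congr rfl fun j _ => by ring
  have hB : ∑ j ∈ Finset.range (n + 1), ((j : ℝ) - k) ^ 2 * T j =
      ((n : ℝ) - k) ^ 2 * ncS n k φ - 2 * ((n : ℝ) - k) * ((n : ℝ) * (φ * ncS (n - 1) k φ)) +
        ((n : ℝ) * (((n : ℝ) - 1) * (φ ^ 2 * ncS (n - 2) k φ)) +
          (n : ℝ) * (φ * ncS (n - 1) k φ)) := by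
    rw [← h0, ← h1, ← h2, Finset.mul_sum, Finset.mul_sum, ← Finset.sum_sub_distrib,
      ← Finset.sum_add_distrib, ← Finset.sum_add_distrib]
    exact Finset.sum_congr rfl fun j _ => by ring
  rw [e1, e2, hA, hB]
  have hN' : ncS n k φ ≠ 0 := ne_of_gt hN
  field_simp
  ring
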